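/- Let (Γ, ⪯) be a left-ordered group and let C be the Conradian soul of (Γ, ⪯). For every c ≻ 1 with c ∉ C there is a crossing (f, g, u, v, w) for (Γ, ⪯) such that u, v, w do not belong to C and 1 ≺ u ≺ w ≺ v ≺ c. -/

import Mathlib

/-- A crossing for a left-ordered group `(Γ, ≤)`. -/
def IsCrossing {Γ : Type*} [Group Γ] [LinearOrder Γ] (f g u v w : Γ) : Prop :=
  u < w ∧ w < v ∧
  (∀ n : ℕ, 0 < n → g ^ n * u < v ∧ u < f ^ n * v) ∧
  ∃ M N : ℕ, 0 < M ∧ 0 < N ∧ f ^ N * v < w ∧ w < g ^ M * u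

/-- A subgroup `C` of a left-ordered group is `≤`-convex. -/
def IsConvexSubgroup {Γ : Type*} [Group Γ] [LinearOrder Γ] (C : Subgroup Γ) : Prop :=
  ∀ c₁ ∈ C, ∀ c₂ ∈ C, ∀ f : Γ, c₁ < f → f < c₂ → f ∈ C

/-- The restriction of the ordering to a subgroup `C` is Conradian. -/
def IsConradianOn {Γ : Type*} [Group Γ] [LinearOrder Γ] (C : Subgroup Γ) : Prop :=
  ∀ f ∈ C, ∀ g ∈ C, 1 < f → 1 < g → ∃ n : ℕ, 0 < n ∧ g < f * g ^ n

/-- `C` is the Conradian soul. -/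
def IsConradianSoul {Γ : Type*} [Group Γ] [LinearOrder Γ] (C : Subgroup Γ) : Prop :=
  IsConvexSubgroup C ∧ IsConradianOn C ∧
  ∀ K : Subgroup Γ, IsConvexSubgroup K → IsConradianOn K → K ≤ C


set_option linter.unusedSectionVars false

namespace LOCrossAux

variable {Γ : Type*} [Group Γ] [LinearOrder Γ] [CovariantClass Γ Γ (· * ·) (· ≤ ·)]

lemma lml {b c : Γ} (a : Γ) (h : b < c) : a * b < a * c := mul_lt_mul_right h a

lemma lmlc {a b c : Γ} (h : a * b < a * c) : b < c := by
  by_contra hc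
  exact absurd (mul_le_mul_right (not_lt.mp hc) a) (not_le.mpr h)

lemma invlt {a : Γ} (h : 1 < a) : a⁻¹ < 1 := by
  have := lml a⁻¹ h; simpa using this

lemma one_le_pow' {f : Γ} (hf : 1 ≤ f) : ∀ n : ℕ, (1:Γ) ≤ f ^ n
  | 0 => by simp
  | (n+1) => by
      rw [pow_succ]
      calc (1:Γ) ≤ f ^ n := one_le_pow' hf n
        _ = f ^ n * 1 := (mul_one _).symm
        _ ≤ f ^ n * f := mul_le_mul_right hf _

lemma pow_le_pow' {f : Γ} (hf : 1 ≤ f) {m n : ℕ} (h : m ≤ n) : f ^ m ≤ f ^ n := by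
  obtain ⟨d, rfl⟩ := Nat.exists_eq_add_of_le h
  rw [pow_add]
  calc f ^ m = f ^ m * 1 := (mul_one _).symm
    _ ≤ f ^ m * f ^ d := mul_le_mul_right (one_le_pow' hf d) _

lemma hp1 {f g : Γ} (hp : ∀ n : ℕ, 0 < n → f * g ^ n < g) : f * g < g := by
  have := hp 1 one_pos; simpa using this

lemma fpow_g_le {f g : Γ} (hp : ∀ n : ℕ, 0 < n → f * g ^ n < g) :
    ∀ d : ℕ, f ^ d * g ≤ g
  | 0 => by simp
  | (d+1) => by
      have h1 : f ^ (d+1) * g = f * (f ^ d * g) := by rw [pow_succ']; group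
      rw [h1]
      exact le_of_lt (lt_of_le_of_lt (mul_le_mul_right (fpow_g_le hp d) f) (hp1 hp))

lemma fpow_g_lt {f g : Γ} (hp : ∀ n : ℕ, 0 < n → f * g ^ n < g) (d : ℕ) :
    f ^ (d+1) * g < g := by
  have h1 : f ^ (d+1) * g = f * (f ^ d * g) := by rw [pow_succ']; group
  rw [h1]
  exact lt_of_le_of_lt (mul_le_mul_right (fpow_g_le hp d) f) (hp1 hp)

lemma one_lt_fg {f g : Γ} (hf : 1 < f) (hg : 1 < g) : 1 < f * g := by
  calc (1:Γ) < f := hf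
    _ = f * 1 := (mul_one f).symm
    _ < f * g := lml f hg

lemma fg_pow_lt {f g : Γ} (hp : ∀ n : ℕ, 0 < n → f * g ^ n < g) :
    ∀ n : ℕ, (f * g) ^ (n+1) < g
  | 0 => by simpa using hp1 hp
  | (n+1) => by
      have h1 : (f * g) ^ (n+2) = (f * g) * (f * g) ^ (n+1) := by rw [pow_succ']
      rw [h1]
      calc (f * g) * (f * g) ^ (n+1) < (f * g) * g := lml _ (fg_pow_lt hp n)
        _ = f * g ^ 2 := by rw [pow_two, mul_assoc]
        _ < g := hp 2 two_pos

/-- the pair `(f, f*g)` is again a non-Conradian pair -/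
lemma pair_fg {f g : Γ} (hp : ∀ n : ℕ, 0 < n → f * g ^ n < g) :
    ∀ n : ℕ, 0 < n → f * (f * g) ^ n < f * g := by
  intro n hn
  obtain ⟨m, rfl⟩ := Nat.exists_eq_add_of_lt hn
  have h2 := lml f (fg_pow_lt hp m)
  simpa [Nat.add_comm] using h2

/-- the pair `(f*g, g)` is again a non-Conradian pair -/
lemma pair_fgg {f g : Γ} (hp : ∀ n : ℕ, 0 < n → f * g ^ n < g) :
    ∀ n : ℕ, 0 < n → (f * g) * g ^ n < g := by
  intro n hn
  have h1 : (f * g) * g ^ n = f * g ^ (n+1) := by rw [pow_succ']; group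
  rw [h1]
  exact hp (n+1) (Nat.succ_pos n)

lemma L4 {f g : Γ} (hp : ∀ n : ℕ, 0 < n → f * g ^ n < g) (i : ℕ) :
    f * (g * (f ^ i * g)) < g := by
  have h1 : g * (f ^ i * g) ≤ g * g := mul_le_mul_right (fpow_g_le hp i) g
  have h2 : f * (g * (f ^ i * g)) ≤ f * (g * g) := mul_le_mul_right h1 f
  have h3 : f * (g * g) = f * g ^ 2 := by rw [pow_two]
  rw [h3] at h2
  exact lt_of_le_of_lt h2 (hp 2 two_pos)

lemma g_sq_lt {f g : Γ} (hp : ∀ n : ℕ, 0 < n → f * g ^ n < g) : g * g < f⁻¹ * g := by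
  have h1 := lml f⁻¹ (hp 2 two_pos)
  have h2 : f⁻¹ * (f * g ^ 2) = g * g := by rw [pow_two]; group
  rwa [h2] at h1



variable {Γ : Type*} [Group Γ] [LinearOrder Γ] [CovariantClass Γ Γ (· * ·) (· ≤ ·)]

/-- every element of a convex subgroup avoiding a positive `q` lies below `q` -/
lemma b1 {C : Subgroup Γ} (hC : IsConradianSoul C) {q c' : Γ}
    (hq1 : 1 < q) (hqC : q ∉ C) (hc' : c' ∈ C) : c' < q := by
  by_contra h
  rcases eq_or_lt_of_le (not_lt.mp h) with he | hl
  · exact hqC (he ▸ hc')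
  · exact hqC (hC.1 1 C.one_mem c' hc' q hq1 hl)

/-- above a positive non-member everything is a non-member -/
lemma b2 {C : Subgroup Γ} (hC : IsConradianSoul C) {p q : Γ}
    (hp1 : 1 < p) (hpC : p ∉ C) (hpq : p ≤ q) : q ∉ C := by
  intro hqC
  rcases eq_or_lt_of_le hpq with he | hl
  · exact hpC (he ▸ hqC)
  · exact hpC (hC.1 1 C.one_mem q hqC p hp1 hl)

/-- in a non-Conradian pair, `g` is not in the soul -/
lemma pair_g_notC {C : Subgroup Γ} (hC : IsConradianSoul C) {f g : Γ}
    (hf : 1 < f) (hg : 1 < g) (hp : ∀ n : ℕ, 0 < n → f * g ^ n < g) : g ∉ C := by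
  intro hgC
  have hfltg : f < g := by
    calc f = f * 1 := (mul_one f).symm
      _ < f * g := lml f hg
      _ < g := hp1 hp
  have hfC : f ∈ C := hC.1 1 C.one_mem g hgC f hf hfltg
  obtain ⟨n, hn, hgn⟩ := hC.2.1 f hfC g hgC hf hg
  exact absurd hgn (not_lt.mpr (hp n hn).le)

/-- "there is a special soul-avoiding crossing below `b`" -/
def SGU {Γ : Type*} [Group Γ] [LinearOrder Γ] (C : Subgroup Γ) (b : Γ) : Prop :=
  ∃ f g t : Γ, ∃ N : ℕ, 1 < f ∧ 1 < g ∧ (∀ n : ℕ, 0 < n → f * g ^ n < g) ∧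
    1 < t * f ^ (N+2) ∧ t * f ^ (N+2) ∉ C ∧ t * f ^ (N+1) * g < b

lemma sgu_mono {C : Subgroup Γ} {b b' : Γ} (h : SGU C b) (hbb : b ≤ b') : SGU C b' := by
  obtain ⟨f, g, t, N, h1, h2, h3, h4, h5, h6⟩ := h
  exact ⟨f, g, t, N, h1, h2, h3, h4, h5, lt_of_lt_of_le h6 hbb⟩

lemma sgu_pos {C : Subgroup Γ} {b : Γ} (h : SGU C b) : 1 < b := by
  obtain ⟨f, g, t, N, hf, hg, hp, h4, _, h6⟩ := h
  have huv : t * f ^ (N+2) < t * f ^ (N+1) * g := by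
    have h1 : f ^ (N+2) < f ^ (N+1) * g := by
      have h2 : f ^ (N+2) = f ^ (N+1) * f := by rw [pow_succ]
      rw [h2]
      have h3 : f ^ (N+1) * f < f ^ (N+1) * (f * g) := lml _ (by
        calc f = f * 1 := (mul_one f).symm
          _ < f * g := lml f hg)
      calc f ^ (N+1) * f < f ^ (N+1) * (f * g) := h3
        _ = f ^ (N+2) * g := by rw [pow_succ]; group
        _ < f ^ (N+1) * g := by
            have := fpow_g_lt hp 0
            have h5 : f ^ (N+2) * g = f ^ (N+1) * (f ^ 1 * g) := by group
            have h6 : f ^ (N+1) * (f ^ 1 * g) < f ^ (N+1) * g :=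
              lml _ (fpow_g_lt hp 0)
            rw [h5]; exact h6
    calc t * f ^ (N+2) < t * (f ^ (N+1) * g) := lml t h1
      _ = t * f ^ (N+1) * g := (mul_assoc _ _ _).symm
  exact lt_trans (lt_trans h4 huv) h6

lemma conjpow (s b : Γ) : ∀ n : ℕ, (s * b * s⁻¹) ^ n = s * b ^ n * s⁻¹
  | 0 => by group
  | (n+1) => by
      rw [pow_succ, conjpow s b n]
      group

/-- the fundamental crossing attached to a non-Conradian pair, translated by `s` -/
lemma crossing_of_pair {f g : Γ} (hf : 1 < f) (hg : 1 < g)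
    (hp : ∀ n : ℕ, 0 < n → f * g ^ n < g) (s : Γ) :
    IsCrossing (s * f * s⁻¹) (s * g * s⁻¹) s (s * (f⁻¹ * g)) (s * g) := by
  have hgh : g < f⁻¹ * g := by
    have h1 := lml f⁻¹ (hp1 hp)
    have h2 : f⁻¹ * (f * g) = g := by group
    rwa [h2] at h1
  refine ⟨by simpa using lml s hg, lml s hgh, ?_, 2, 2, two_pos, two_pos, ?_, ?_⟩
  · intro n hn
    constructor
    · -- (s*g*s⁻¹)^n * s = s * g^n < s * (f⁻¹ * g)
      have h1 : (s * g * s⁻¹) ^ n * s = s * g ^ n := by rw [conjpow]; group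
      rw [h1]
      refine lml s ?_
      have h2 := lml f⁻¹ (hp n hn)
      have h3 : f⁻¹ * (f * g ^ n) = g ^ n := by group
      rwa [h3] at h2
    · -- s < (s*f*s⁻¹)^n * (s * (f⁻¹*g)) = s * (f^(n-1) * g)
      obtain ⟨m, rfl⟩ := Nat.exists_eq_add_of_lt hn
      have h1 : (s * f * s⁻¹) ^ (0 + m + 1) * (s * (f⁻¹ * g)) = s * (f ^ m * g) := by
        rw [conjpow]
        have : f ^ (0 + m + 1) = f ^ m * f := by rw [Nat.zero_add, pow_succ]
        rw [this]; group
      rw [h1]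
      have h2 : (1:Γ) < f ^ m * g := by
        calc (1:Γ) ≤ f ^ m := one_le_pow' hf.le m
          _ = f ^ m * 1 := (mul_one _).symm
          _ < f ^ m * g := lml _ hg
      calc s = s * 1 := (mul_one s).symm
        _ < s * (f ^ m * g) := lml s h2
  · -- (s*f*s⁻¹)^2 * (s * (f⁻¹*g)) = s * (f*g) < s * g
    have h1 : (s * f * s⁻¹) ^ 2 * (s * (f⁻¹ * g)) = s * (f * g) := by
      rw [conjpow]; group
    rw [h1]
    exact lml s (hp1 hp)
  · -- s * g < (s*g*s⁻¹)^2 * s = s * g^2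
    have h1 : (s * g * s⁻¹) ^ 2 * s = s * (g * g) := by rw [conjpow, pow_two]; group
    rw [h1]
    have h2 : g < g * g := by
      calc g = g * 1 := (mul_one g).symm
        _ < g * g := lml g hg
    exact lml s h2



variable {Γ : Type*} [Group Γ] [LinearOrder Γ] [CovariantClass Γ Γ (· * ·) (· ≤ ·)]

lemma sgu_mul {C : Subgroup Γ} (hC : IsConradianSoul C) {x y : Γ}
    (hx : ¬ SGU C x) (hy : ¬ SGU C y) : ¬ SGU C (x * y) := by
  intro hs
  obtain ⟨f, g, t, N, hf, hg, hp, hu, huC, hv⟩ := hs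
  have hgC : g ∉ C := pair_g_notC hC hf hg hp
  -- family facts
  have hupos : ∀ k, N ≤ k → 1 < t * f ^ (k+2) := fun k hk =>
    lt_of_lt_of_le hu (mul_le_mul_right (pow_le_pow' hf.le (by omega)) t)
  have hunotC : ∀ k, N ≤ k → t * f ^ (k+2) ∉ C := fun k hk =>
    b2 hC hu huC (mul_le_mul_right (pow_le_pow' hf.le (by omega)) t)
  have hvle : ∀ k, N ≤ k → t * f ^ (k+1) * g ≤ t * f ^ (N+1) * g := by
    intro k hk
    obtain ⟨d, hd⟩ := Nat.exists_eq_add_of_le hk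
    have h1 : t * f ^ (k+1) * g = t * (f ^ (N+1) * (f ^ d * g)) := by
      subst hd; rw [show N + d + 1 = (N+1) + d by omega, pow_add]; group
    rw [h1]
    calc t * (f ^ (N+1) * (f ^ d * g)) ≤ t * (f ^ (N+1) * g) :=
          mul_le_mul_right (mul_le_mul_right (fpow_g_le hp d) _) t
      _ = t * f ^ (N+1) * g := (mul_assoc _ _ _).symm
  have hvlt : ∀ k, N ≤ k → t * f ^ (k+1) * g < x * y := fun k hk =>
    lt_of_le_of_lt (hvle k hk) hv
  have hvstep : ∀ k : ℕ, t * f ^ (k+2) * g < t * f ^ (k+1) * g := by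
    intro k
    have h1 : t * f ^ (k+2) * g = t * (f ^ (k+1) * (f ^ 1 * g)) := by group
    rw [h1]
    calc t * (f ^ (k+1) * (f ^ 1 * g)) < t * (f ^ (k+1) * g) :=
          lml t (lml _ (fpow_g_lt hp 0))
      _ = t * f ^ (k+1) * g := (mul_assoc _ _ _).symm
  -- Case A : some v_k is below x
  by_cases hA : ∃ k, N ≤ k ∧ t * f ^ (k+1) * g < x
  · obtain ⟨k, hk, hlt⟩ := hA
    exact hx ⟨f, g, t, k, hf, hg, hp, hupos k hk, hunotC k hk, hlt⟩
  push_neg at hA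
  -- Case B : some u_k is above x with the quotient outside C
  by_cases hB : ∃ k, N ≤ k ∧ x < t * f ^ (k+2) ∧ x⁻¹ * (t * f ^ (k+2)) ∉ C
  · obtain ⟨k, hk, hxlt, hBC⟩ := hB
    refine hy ⟨f, g, x⁻¹ * t, k, hf, hg, hp, ?_, ?_, ?_⟩
    · have h1 : x⁻¹ * t * f ^ (k+2) = x⁻¹ * (t * f ^ (k+2)) := mul_assoc _ _ _
      rw [h1]
      have := lml x⁻¹ hxlt; simpa using this
    · have h1 : x⁻¹ * t * f ^ (k+2) = x⁻¹ * (t * f ^ (k+2)) := mul_assoc _ _ _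
      rw [h1]; exact hBC
    · have h2 := lml x⁻¹ (hvlt k hk)
      have h3 : x⁻¹ * (x * y) = y := by group
      rw [h3] at h2
      calc x⁻¹ * t * f ^ (k+1) * g = x⁻¹ * (t * f ^ (k+1) * g) := by group
        _ < y := h2
  push_neg at hB
  -- Case C1 : x is below (or equal to) some u_k
  by_cases hex : ∃ k, N ≤ k ∧ x ≤ t * f ^ (k+2)
  · obtain ⟨k₀, hk₀, hxle⟩ := hex
    have haC : ∀ k, k₀ ≤ k → x⁻¹ * (t * f ^ (k+2)) ∈ C := by
      intro k hk
      have hle2 : x ≤ t * f ^ (k+2) :=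
        le_trans hxle (mul_le_mul_right (pow_le_pow' hf.le (by omega)) t)
      rcases eq_or_lt_of_le hle2 with he | hl
      · rw [← he]; simpa using C.one_mem
      · exact hB k (le_trans hk₀ hk) hl
    have hfC : f ∈ C := by
      have h1 := haC k₀ le_rfl
      have h2 := haC (k₀+1) (by omega)
      have h3 : f = (x⁻¹ * (t * f ^ (k₀+2)))⁻¹ * (x⁻¹ * (t * f ^ (k₀+1+2))) := by
        rw [show k₀+1+2 = (k₀+2)+1 by omega, pow_succ]; group
      rw [h3]; exact C.mul_mem (C.inv_mem h1) h2
    have hAC : x⁻¹ * t * f ^ (k₀+2) ∈ C := by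
      have h3 : x⁻¹ * t * f ^ (k₀+2) = x⁻¹ * (t * f ^ (k₀+2)) := mul_assoc _ _ _
      rw [h3]; exact haC k₀ le_rfl
    refine hy ⟨f, g, x⁻¹ * t * f ^ (k₀+2) * g, 0, hf, hg, hp, ?_, ?_, ?_⟩
    · -- positivity of the bottom point
      have e1 : x⁻¹ * t * f ^ (k₀+2) * g * f ^ (0+2)
          = (x⁻¹ * t * f ^ (k₀+2)) * (g * f ^ 2) := by group
      rw [e1]
      have h4 : (x⁻¹ * t * f ^ (k₀+2))⁻¹ < g := b1 hC hg hgC (C.inv_mem hAC)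
      have h5 : g < g * f ^ 2 := by
        have hf2 : (1:Γ) < f ^ 2 := lt_of_lt_of_le hf (by
          have := pow_le_pow' hf.le (show 1 ≤ 2 by omega)
          simpa using this)
        calc g = g * 1 := (mul_one g).symm
          _ < g * f ^ 2 := lml g hf2
      have h6 := lml (x⁻¹ * t * f ^ (k₀+2)) (lt_trans h4 h5)
      rwa [mul_inv_cancel] at h6
    · -- the bottom point is not in C
      have e1 : x⁻¹ * t * f ^ (k₀+2) * g * f ^ (0+2)
          = (x⁻¹ * t * f ^ (k₀+2)) * (g * f ^ 2) := by group
      rw [e1]; intro hmem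
      have hgf2 : g * f ^ 2 ∈ C := by
        have e2 : g * f ^ 2
            = (x⁻¹ * t * f ^ (k₀+2))⁻¹ * ((x⁻¹ * t * f ^ (k₀+2)) * (g * f ^ 2)) := by group
        rw [e2]; exact C.mul_mem (C.inv_mem hAC) hmem
      have e3 : g = (g * f ^ 2) * (f ^ 2)⁻¹ := by group
      exact hgC (by rw [e3]; exact C.mul_mem hgf2 (C.inv_mem (C.pow_mem hfC _)))
    · -- the top point is below y
      have e2 : x⁻¹ * t * f ^ (k₀+2) * g * f ^ (0+1) * g
          = (x⁻¹ * t) * (f ^ (k₀+1) * (f * (g * (f ^ 1 * g)))) := by group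
      rw [e2]
      have h8 := lml (f ^ (k₀+1)) (L4 hp 1)
      have h9 := lml (x⁻¹ * t) h8
      have e3 : (x⁻¹ * t) * (f ^ (k₀+1) * g) = x⁻¹ * (t * f ^ (k₀+1) * g) := by group
      rw [e3] at h9
      have h10 := lml x⁻¹ (hvlt k₀ hk₀)
      have e4 : x⁻¹ * (x * y) = y := by group
      rw [e4] at h10
      exact lt_trans h9 h10
  push_neg at hex
  -- now : ∀ k ≥ N, u_k < x
  -- Case: x equals some v_k
  by_cases hE : ∃ k, N ≤ k ∧ x = t * f ^ (k+1) * g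
  · obtain ⟨k, hk, hxe⟩ := hE
    refine hx ⟨f, g, t, k+1, hf, hg, hp, hupos (k+1) (by omega), hunotC (k+1) (by omega), ?_⟩
    rw [hxe]
    exact hvstep k
  push_neg at hE
  have hxv : ∀ k, N ≤ k → x < t * f ^ (k+1) * g := fun k hk =>
    lt_of_le_of_ne (hA k hk) (hE k hk)
  -- Case C2a : some quotient x⁻¹ v_{a+1} is outside C
  by_cases hC2a : ∃ a, N ≤ a ∧ x⁻¹ * (t * f ^ (a+2) * g) ∉ C
  · obtain ⟨a, ha, hBC⟩ := hC2a
    have hBpos : 1 < x⁻¹ * (t * f ^ (a+2) * g) := by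
      have := lml x⁻¹ (hxv (a+1) (by omega))
      simpa using this
    refine hy ⟨f, f * g, (x⁻¹ * (t * f ^ (a+2) * g)) * (f ^ 2)⁻¹, 0,
      hf, one_lt_fg hf hg, pair_fg hp, ?_, ?_, ?_⟩
    · have e5 : (x⁻¹ * (t * f ^ (a+2) * g)) * (f ^ 2)⁻¹ * f ^ (0+2)
          = x⁻¹ * (t * f ^ (a+2) * g) := by group
      rw [e5]; exact hBpos
    · have e5 : (x⁻¹ * (t * f ^ (a+2) * g)) * (f ^ 2)⁻¹ * f ^ (0+2)
          = x⁻¹ * (t * f ^ (a+2) * g) := by group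
      rw [e5]; exact hBC
    · have e6 : (x⁻¹ * (t * f ^ (a+2) * g)) * (f ^ 2)⁻¹ * f ^ (0+1) * (f * g)
          = x⁻¹ * (t * (f ^ (a+1) * (f * (g * g)))) := by group
      rw [e6]
      have h11 : f * (g * g) < g := by
        have h := hp 2 two_pos; rwa [pow_two] at h
      have h14 := lml x⁻¹ (lml t (lml (f ^ (a+1)) h11))
      have e7 : x⁻¹ * (t * (f ^ (a+1) * g)) = x⁻¹ * (t * f ^ (a+1) * g) := by group
      rw [e7] at h14
      have h15 := lml x⁻¹ (hvlt a ha)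
      have e8 : x⁻¹ * (x * y) = y := by group
      rw [e8] at h15
      exact lt_trans h14 h15
  push_neg at hC2a
  -- Case C2b : all those quotients are in C — derive an outright contradiction
  have he : x⁻¹ * (t * f ^ (N+2) * g) ∈ C := hC2a N le_rfl
  have he1 : 1 < x⁻¹ * (t * f ^ (N+2) * g) := by
    have := lml x⁻¹ (hxv (N+1) (by omega))
    simpa using this
  have hrinvC : g⁻¹ * f⁻¹ * g ∈ C := by
    have hrC : g⁻¹ * f * g ∈ C := by
      have h3 : g⁻¹ * f * g
          = (x⁻¹ * (t * f ^ (N+2) * g))⁻¹ * (x⁻¹ * (t * f ^ (N+1+2) * g)) := by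
        rw [show N+1+2 = (N+2)+1 by omega, pow_succ]; group
      rw [h3]; exact C.mul_mem (C.inv_mem he) (hC2a (N+1) (by omega))
    have h4 : g⁻¹ * f⁻¹ * g = (g⁻¹ * f * g)⁻¹ := by group
    rw [h4]; exact C.inv_mem hrC
  have hδ : 1 < (g * g)⁻¹ * (f⁻¹ * g) := by
    have h := lml (g * g)⁻¹ (g_sq_lt hp)
    rwa [inv_mul_cancel] at h
  have hkey : x < t * f ^ (N+2) * (g⁻¹ * (f⁻¹ * g)) := by
    have h16a := lml (x⁻¹ * (t * f ^ (N+2) * g)) hδ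
    rw [mul_one] at h16a
    have h16 := lt_trans he1 h16a
    have h17 := lml x h16
    rw [mul_one] at h17
    have e9 : x * ((x⁻¹ * (t * f ^ (N+2) * g)) * ((g * g)⁻¹ * (f⁻¹ * g)))
        = t * f ^ (N+2) * (g⁻¹ * (f⁻¹ * g)) := by group
    rwa [e9] at h17
  by_cases hfC : f ∈ C
  · -- f ∈ C : squeeze t⁻¹x into C, contradiction with g ∉ C
    have hq1 : f ^ (N+2) ∈ C := C.pow_mem hfC _
    have hq2 : f ^ (N+2) * (g⁻¹ * (f⁻¹ * g)) ∈ C := by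
      have e10 : f ^ (N+2) * (g⁻¹ * (f⁻¹ * g)) = f ^ (N+2) * (g⁻¹ * f⁻¹ * g) := by group
      rw [e10]; exact C.mul_mem hq1 hrinvC
    have hx1 : f ^ (N+2) < t⁻¹ * x := by
      have := lml t⁻¹ (hex N le_rfl)
      simpa using this
    have hx2 : t⁻¹ * x < f ^ (N+2) * (g⁻¹ * (f⁻¹ * g)) := by
      have h := lml t⁻¹ hkey
      have e11 : t⁻¹ * (t * f ^ (N+2) * (g⁻¹ * (f⁻¹ * g)))
          = f ^ (N+2) * (g⁻¹ * (f⁻¹ * g)) := by group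
      rwa [e11] at h
    have htx : t⁻¹ * x ∈ C := hC.1 _ hq1 _ hq2 _ hx1 hx2
    have hfg2 : f ^ (N+2) * g ∈ C := by
      have e12 : f ^ (N+2) * g = (t⁻¹ * x) * (x⁻¹ * (t * f ^ (N+2) * g)) := by group
      rw [e12]; exact C.mul_mem htx he
    refine hgC ?_
    have e13 : g = (f ^ (N+2))⁻¹ * (f ^ (N+2) * g) := by group
    rw [e13]; exact C.mul_mem (C.inv_mem hq1) hfg2
  · -- f ∉ C : the conjugate is below f, contradiction with u_{N+1} < x < u_{N+1}
    have hlt : g⁻¹ * f⁻¹ * g < f := b1 hC hf hfC hrinvC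
    have h18 : t * f ^ (N+2) * (g⁻¹ * (f⁻¹ * g)) < t * f ^ (N+1+2) := by
      have h19 := lml (t * f ^ (N+2)) hlt
      have e14 : t * f ^ (N+2) * (g⁻¹ * f⁻¹ * g)
          = t * f ^ (N+2) * (g⁻¹ * (f⁻¹ * g)) := by group
      have e15 : t * f ^ (N+2) * f = t * f ^ (N+1+2) := by
        rw [show N+1+2 = (N+2)+1 by omega, pow_succ]; group
      rw [e14, e15] at h19; exact h19
    exact absurd (lt_trans hkey (lt_trans h18 (hex (N+1) (by omega)))) (lt_irrefl x)



variable {Γ : Type*} [Group Γ] [LinearOrder Γ] [CovariantClass Γ Γ (· * ·) (· ≤ ·)]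

/-- the subgroup of elements with no special crossing below them (on either side) -/
def Ksub (C : Subgroup Γ) (hC : IsConradianSoul C) : Subgroup Γ where
  carrier := {x | ¬ SGU C x ∧ ¬ SGU C x⁻¹}
  one_mem' := by
    constructor
    · intro h; exact absurd (sgu_pos h) (lt_irrefl 1)
    · intro h; rw [inv_one] at h; exact absurd (sgu_pos h) (lt_irrefl 1)
  mul_mem' := by
    intro a b ha hb
    exact ⟨sgu_mul hC ha.1 hb.1, by
      rw [mul_inv_rev]; exact sgu_mul hC hb.2 ha.2⟩
  inv_mem' := by
    intro a ha
    exact ⟨ha.2, by rw [inv_inv]; exact ha.1⟩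

lemma Ksub_mem {C : Subgroup Γ} {hC : IsConradianSoul C} {x : Γ} :
    x ∈ Ksub C hC ↔ ¬ SGU C x ∧ ¬ SGU C x⁻¹ := Iff.rfl

lemma Ksub_convex (C : Subgroup Γ) (hC : IsConradianSoul C) :
    IsConvexSubgroup (Ksub C hC) := by
  intro c₁ h1 c₂ h2 q hq1 hq2
  have hp1' : (1:Γ) < c₁⁻¹ * q := by
    have := lml c₁⁻¹ hq1; rwa [inv_mul_cancel] at this
  have hp2' : c₁⁻¹ * q < c₁⁻¹ * c₂ := lml c₁⁻¹ hq2
  have hmem : c₁⁻¹ * c₂ ∈ Ksub C hC := (Ksub C hC).mul_mem ((Ksub C hC).inv_mem h1) h2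
  have hpK : c₁⁻¹ * q ∈ Ksub C hC := by
    rw [Ksub_mem]
    constructor
    · intro hs; exact (Ksub_mem.mp hmem).1 (sgu_mono hs hp2'.le)
    · intro hs; exact absurd (sgu_pos hs) (not_lt.mpr (invlt hp1').le)
  have : q = c₁ * (c₁⁻¹ * q) := by group
  rw [this]
  exact (Ksub C hC).mul_mem h1 hpK

lemma Ksub_conradian (C : Subgroup Γ) (hC : IsConradianSoul C) :
    IsConradianOn (Ksub C hC) := by
  intro f hfK g hgK hf hg
  by_contra hcon
  push_neg at hcon
  have hle : ∀ n : ℕ, 0 < n → f * g ^ n ≤ g := fun n hn => hcon n hn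
  have hps : ∀ n : ℕ, 0 < n → f * g ^ n < g := by
    intro n hn
    rcases eq_or_lt_of_le (hle n hn) with he | h
    · exfalso
      have h1 : f * g ^ (n+1) = g * g := by rw [pow_succ, ← mul_assoc, he]
      have h2 := hle (n+1) (by omega)
      rw [h1] at h2
      have h3 : g < g * g := by
        calc g = g * 1 := (mul_one g).symm
          _ < g * g := lml g hg
      exact absurd h2 (not_le.mpr h3)
    · exact h
  have hgC : g ∉ C := pair_g_notC hC hf hg hps
  have hsgu : SGU C (g * g) := by
    refine ⟨f, g, g, 0, hf, hg, hps, ?_, ?_, ?_⟩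
    · have hf2 : (1:Γ) < f ^ 2 := lt_of_lt_of_le hf (by
        have := pow_le_pow' hf.le (show 1 ≤ 2 by omega)
        simpa using this)
      calc (1:Γ) < g := hg
        _ = g * 1 := (mul_one g).symm
        _ < g * f ^ (0+2) := lml g hf2
    · refine b2 hC hg hgC ?_
      have hf2 : (1:Γ) ≤ f ^ 2 := (one_le_pow' hf.le 2)
      calc g = g * 1 := (mul_one g).symm
        _ ≤ g * f ^ (0+2) := mul_le_mul_right hf2 g
    · have e1 : g * f ^ (0+1) * g = g * (f * g) := by group
      rw [e1]
      exact lml g (hp1 hps)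
  have hggK : g * g ∈ Ksub C hC := (Ksub C hC).mul_mem hgK hgK
  exact (Ksub_mem.mp hggK).1 hsgu

end LOCrossAux


/-- For every `c > 1` not in the Conradian soul `C`, there is a crossing
`(f, g, u, v, w)` such that `u, v, w ∉ C` and `1 < u < w < v < c`. -/
theorem exists_crossing_outside_soul (Γ : Type*) [Group Γ] [LinearOrder Γ]
    [CovariantClass Γ Γ (· * ·) (· ≤ ·)]
    (C : Subgroup Γ) (hC : IsConradianSoul C)
    (c : Γ) (hc : 1 < c) (hcC : c ∉ C) :
    ∃ f g u v w : Γ, IsCrossing f g u v w ∧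
      u ∉ C ∧ v ∉ C ∧ w ∉ C ∧ 1 < u ∧ u < w ∧ w < v ∧ v < c := by
  classical
  have hKC : LOCrossAux.Ksub C hC ≤ C :=
    hC.2.2 _ (LOCrossAux.Ksub_convex C hC) (LOCrossAux.Ksub_conradian C hC)
  have hsgu : LOCrossAux.SGU C c := by
    by_contra hs
    have h2 : ¬ LOCrossAux.SGU C c⁻¹ := fun hs2 =>
      absurd (LOCrossAux.sgu_pos hs2) (not_lt.mpr (LOCrossAux.invlt hc).le)
    exact hcC (hKC (LOCrossAux.Ksub_mem.mpr ⟨hs, h2⟩))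
  obtain ⟨f, g, t, N, hf, hg, hp, hu, huC, hv⟩ := hsgu
  have huw : t * f ^ (N+2) < (t * f ^ (N+2)) * g := by
    have := LOCrossAux.lml (t * f ^ (N+2)) hg
    rwa [mul_one] at this
  have hwv : (t * f ^ (N+2)) * g < t * f ^ (N+1) * g := by
    have h1 : (t * f ^ (N+2)) * g = t * (f ^ (N+1) * (f ^ 1 * g)) := by group
    rw [h1]
    calc t * (f ^ (N+1) * (f ^ 1 * g)) < t * (f ^ (N+1) * g) :=
          LOCrossAux.lml t (LOCrossAux.lml _ (LOCrossAux.fpow_g_lt hp 0))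
      _ = t * f ^ (N+1) * g := (mul_assoc _ _ _).symm
  refine ⟨(t * f ^ (N+2)) * f * (t * f ^ (N+2))⁻¹,
    (t * f ^ (N+2)) * g * (t * f ^ (N+2))⁻¹,
    t * f ^ (N+2), t * f ^ (N+1) * g, (t * f ^ (N+2)) * g,
    ?_, huC, ?_, ?_, hu, huw, hwv, hv⟩
  · have hcr := LOCrossAux.crossing_of_pair hf hg hp (t * f ^ (N+2))
    have e1 : (t * f ^ (N+2)) * (f⁻¹ * g) = t * f ^ (N+1) * g := by
      rw [show N+2 = (N+1)+1 by omega, pow_succ]; group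
    rwa [e1] at hcr
  · exact LOCrossAux.b2 hC hu huC (le_of_lt (lt_trans huw hwv))
  · exact LOCrossAux.b2 hC hu huC (le_of_lt huw)
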